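/- For all n ≥ 1, k ≥ 1 and 0 ≤ r ≤ k−1, the number of permutations in L_{n,k;r} avoiding the monotone pattern 12⋯(k+1) equals the number of standard Young tableaux of shape ⟨k^n, r⟩; that is, |L_{n,k;r}(12⋯(k+1))| = f^{⟨k^n, r⟩}. -/

import Mathlib

/-- The word `w` (a sequence of distinct values) contains the pattern `p`. -/
def ContainsPat {N s : ℕ} {α : Type*} [LinearOrder α]
    (w : Fin N → α) (p : Fin s → ℕ) : Prop :=
  ∃ f : Fin s → Fin N, StrictMono f ∧ ∀ a b : Fin s, p a < p b ↔ w (f a) < w (f b)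

/-- The word `w` avoids the pattern `p`. -/
def AvoidsPat {N s : ℕ} {α : Type*} [LinearOrder α]
    (w : Fin N → α) (p : Fin s → ℕ) : Prop :=
  ¬ ContainsPat w p

/-- The monotone (identity) pattern `1 2 ⋯ m`. -/
def MonoPat (m : ℕ) : Fin m → ℕ := fun i => (i : ℕ)

/-- Position of the entry `w_{i,j}` (with `i`, `j` 0-indexed) of a word of length `n * k`
written in `n` consecutive blocks of length `k`. -/
def Lpos (n k i j : ℕ) (hi : i < n) (hj : j < k) : Fin (n * k) :=
  ⟨i * k + j, by
    calc i * k + j < i * k + k := by omega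
      _ = (i + 1) * k := by ring
      _ ≤ n * k := Nat.mul_le_mul (Nat.succ_le_of_lt hi) (le_refl k)⟩

/-- Membership in `L_{n,k}`: conditions (L1) and (L2). -/
def MemL (n k : ℕ) (w : Equiv.Perm (Fin (n * k))) : Prop :=
  (∀ (i j : ℕ) (hi : i < n) (hj : j + 1 < k),
      w (Lpos n k i j hi (by omega)) < w (Lpos n k i (j + 1) hi hj)) ∧
  (∀ (i j : ℕ) (hi : i + 1 < n) (hj : j + 1 < k),
      w (Lpos n k (i + 1) j hi (by omega)) < w (Lpos n k i (j + 1) (by omega) hj))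

/-- Position of the entry `w_{i,j}` (`i`, `j` 0-indexed) among the `n` blocks of length `k`
following the initial block of length `r`. -/
def LrPos (n k r i j : ℕ) (hi : i < n) (hj : j < k) : Fin (n * k + r) :=
  ⟨r + (i * k + j), by
    have h : i * k + j < n * k := by
      calc i * k + j < i * k + k := by omega
        _ = (i + 1) * k := by ring
        _ ≤ n * k := Nat.mul_le_mul (Nat.succ_le_of_lt hi) (le_refl k)
    omega⟩

/-- Membership in `L_{n,k;r}`: conditions (L1′) and (L2′). -/
def MemLr (n k r : ℕ) (w : Equiv.Perm (Fin (n * k + r))) : Prop :=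
  (∀ (j : ℕ) (hj : j + 1 < r), w ⟨j, by omega⟩ < w ⟨j + 1, by omega⟩) ∧
  (∀ (i j : ℕ) (hi : i < n) (hj : j + 1 < k),
      w (LrPos n k r i j hi (by omega)) < w (LrPos n k r i (j + 1) hi hj)) ∧
  (∀ (i j : ℕ) (hi : i + 1 < n) (hj : j + 1 < k),
      w (LrPos n k r (i + 1) j hi (by omega)) < w (LrPos n k r i (j + 1) (by omega) hj)) ∧
  (∀ (j : ℕ) (hj : j < r) (h : r + j < n * k + r), w ⟨r + j, h⟩ < w ⟨j, by omega⟩)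

/-- `w` is an (up-down) alternating permutation: `w_1 < w_2 > w_3 < w_4 > ⋯`. -/
def IsAlternating {m : ℕ} (w : Equiv.Perm (Fin m)) : Prop :=
  ∀ (i : ℕ) (h : i + 1 < m),
    (Even i → w ⟨i, Nat.lt_of_succ_lt h⟩ < w ⟨i + 1, h⟩) ∧
    (¬ Even i → w ⟨i + 1, h⟩ < w ⟨i, Nat.lt_of_succ_lt h⟩)

/-- `f : ℕ → ℕ` (0-indexed parts) is a partition: weakly decreasing, eventually zero. -/
def IsPartitionFun (f : ℕ → ℕ) : Prop :=
  (∀ i, f (i + 1) ≤ f i) ∧ ∃ N, ∀ i, N ≤ i → f i = 0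

/-- The rectangular partition `⟨m^n⟩` as a function. -/
def RectShape (n m : ℕ) : ℕ → ℕ := fun i => if i < n then m else 0

/-- `c = (i, j)` (0-indexed row `i`, column `j`) is a box of the skew diagram `λ/μ`. -/
def IsCell (lam mu : ℕ → ℕ) (c : ℕ × ℕ) : Prop :=
  mu c.1 ≤ c.2 ∧ c.2 < lam c.1

/-- A standard Young tableau of skew shape `λ/μ`: a filling of the boxes by `1, …, m`
(each used once, `m` = number of boxes), strictly increasing along rows and columns.
Boxes outside of the shape are filled with `0`. -/
structure SkewSYT (lam mu : ℕ → ℕ) where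
  entry : ℕ × ℕ → ℕ
  entry_outside : ∀ c, ¬ IsCell lam mu c → entry c = 0
  entry_pos : ∀ c, IsCell lam mu c → 1 ≤ entry c
  entry_inj : ∀ c c', IsCell lam mu c → IsCell lam mu c' → entry c = entry c' → c = c'
  entry_init : ∀ c, IsCell lam mu c → ∀ v, 1 ≤ v → v < entry c →
      ∃ c', IsCell lam mu c' ∧ entry c' = v
  row_strict : ∀ i j j', IsCell lam mu (i, j) → IsCell lam mu (i, j') → j < j' →
      entry (i, j) < entry (i, j')
  col_strict : ∀ i i' j, IsCell lam mu (i, j) → IsCell lam mu (i', j) → i < i' →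
      entry (i, j) < entry (i', j)

/-- `c` comes strictly before `c'` in reading order (last row first, rows left to right). -/
def ReadLT (c c' : ℕ × ℕ) : Prop :=
  c'.1 < c.1 ∨ (c.1 = c'.1 ∧ c.2 < c'.2)

/-- The reading word of the tableau `T` contains the pattern `p`. -/
def ReadingContains {lam mu : ℕ → ℕ} (T : SkewSYT lam mu) {s : ℕ} (p : Fin s → ℕ) : Prop :=
  ∃ c : Fin s → ℕ × ℕ,
    (∀ a, IsCell lam mu (c a)) ∧
    (∀ a b : Fin s, a < b → ReadLT (c a) (c b)) ∧
    (∀ a b : Fin s, p a < p b ↔ T.entry (c a) < T.entry (c b))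

/-- Number of boxes of the skew diagram `λ/μ`. -/
noncomputable def NumCells (lam mu : ℕ → ℕ) : ℕ := Set.ncard {c : ℕ × ℕ | IsCell lam mu c}

/-- The `j`-th part (1-indexed) of the conjugate partition of `λ`:
the number of rows of `λ` of length at least `j`. -/
noncomputable def ConjPart (lam : ℕ → ℕ) (j : ℕ) : ℕ := Set.ncard {i : ℕ | j ≤ lam i}

namespace Stmt8Aux

abbrev LamF (n k r : ℕ) : ℕ → ℕ := fun i => if i < n then k else if i = n then r else 0

def CellP (n k r : ℕ) (c : ℕ × ℕ) : Prop :=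
  (c.1 < n ∧ c.2 < k) ∨ (c.1 = n ∧ c.2 < r)

lemma isCell_iff (n k r : ℕ) (c : ℕ × ℕ) :
    IsCell (LamF n k r) (fun _ => 0) c ↔ CellP n k r c := by
  unfold IsCell CellP LamF
  constructor
  · rintro ⟨-, h2⟩
    split_ifs at h2 with h h'
    · exact Or.inl ⟨h, h2⟩
    · exact Or.inr ⟨h', h2⟩
    · omega
  · rintro (⟨h1, h2⟩ | ⟨h1, h2⟩)
    · exact ⟨Nat.zero_le _, by simp [h1, h2]⟩
    · refine ⟨Nat.zero_le _, ?_⟩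
      have hn : ¬ c.1 < n := by omega
      simp [hn, h1, h2]

lemma blk_lt {n k i j : ℕ} (hi : i < n) (hj : j < k) : i * k + j < n * k := by
  calc i * k + j < i * k + k := by omega
    _ = (i + 1) * k := by ring
    _ ≤ n * k := Nat.mul_le_mul (by omega) (le_refl k)

lemma blk_unique {k a a' j j' : ℕ} (hj : j < k) (hj' : j' < k)
    (h : a * k + j = a' * k + j') : a = a' ∧ j = j' := by
  have key : ∀ b b' m m' : ℕ, m < k → m' < k → b < b' → b * k + m < b' * k + m' := by
    intro b b' m m' hm hm' hbb
    calc b * k + m < b * k + k := by omega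
      _ = (b + 1) * k := by ring
      _ ≤ b' * k := Nat.mul_le_mul (by omega) (le_refl k)
      _ ≤ b' * k + m' := Nat.le_add_right _ _
  rcases lt_trichotomy a a' with hlt | heq | hgt
  · exact absurd h (by have := key a a' j j' hj hj' hlt; omega)
  · subst heq
    exact ⟨rfl, by omega⟩
  · exact absurd h (by have := key a' a j' j hj' hj hgt; omega)

lemma pos_split {n k r : ℕ} (hk : 1 ≤ k) (p : ℕ) (hp : p < n * k + r) :
    p < r ∨ ∃ i j, i < n ∧ j < k ∧ p = r + (i * k + j) := by
  by_cases h : p < r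
  · exact Or.inl h
  · right
    refine ⟨(p - r) / k, (p - r) % k, ?_, Nat.mod_lt _ (by omega), ?_⟩
    · have h1 : p - r < n * k := by omega
      exact Nat.div_lt_of_lt_mul (by rwa [Nat.mul_comm] at h1)
    · have h2 := Nat.div_add_mod (p - r) k
      have h3 : (p - r) / k * k = k * ((p - r) / k) := Nat.mul_comm _ _
      omega

def cellOf (n k r : ℕ) (p : ℕ) : ℕ × ℕ :=
  if p < r then (n, p) else (n - 1 - (p - r) / k, (p - r) % k)

lemma cellOf_init {n k r j : ℕ} (hj : j < r) : cellOf n k r j = (n, j) := if_pos hj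

lemma cellOf_lr {n k r i j : ℕ} (hk : 1 ≤ k) (hi : i < n) (hj : j < k) :
    cellOf n k r (r + (i * k + j)) = (n - 1 - i, j) := by
  unfold cellOf
  rw [if_neg (by omega)]
  have hcomm : i * k = k * i := Nat.mul_comm i k
  have h1 : r + (i * k + j) - r = k * i + j := by omega
  rw [h1, Nat.mul_add_div (by omega), Nat.div_eq_of_lt hj, Nat.mul_add_mod,
    Nat.mod_eq_of_lt hj]
  simp

def posOf (n k r : ℕ) (c : ℕ × ℕ) : ℕ :=
  if c.1 < n then r + ((n - 1 - c.1) * k + c.2) else c.2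

lemma posOf_lt {n k r : ℕ} {c : ℕ × ℕ} (hc : CellP n k r c) : posOf n k r c < n * k + r := by
  unfold posOf
  rcases hc with ⟨h1, h2⟩ | ⟨h1, h2⟩
  · rw [if_pos h1]
    have := blk_lt (show n - 1 - c.1 < n by omega) h2
    omega
  · rw [if_neg (by omega)]
    omega

lemma posOf_inj {n k r : ℕ} {c c' : ℕ × ℕ} (hc : CellP n k r c) (hc' : CellP n k r c')
    (h : posOf n k r c = posOf n k r c') : c = c' := by
  unfold posOf at h
  rcases hc with ⟨h1, h2⟩ | ⟨h1, h2⟩ <;> rcases hc' with ⟨h1', h2'⟩ | ⟨h1', h2'⟩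
  · rw [if_pos h1, if_pos h1'] at h
    have h3 : (n - 1 - c.1) * k + c.2 = (n - 1 - c'.1) * k + c'.2 := by omega
    obtain ⟨e1, e2⟩ := blk_unique h2 h2' h3
    have e3 : c.1 = c'.1 := by omega
    exact Prod.ext e3 e2
  · rw [if_pos h1, if_neg (by omega)] at h
    omega
  · rw [if_neg (by omega), if_pos h1'] at h
    omega
  · rw [if_neg (by omega), if_neg (by omega)] at h
    exact Prod.ext (by omega) h

lemma posOf_cellOf {n k r : ℕ} (hk : 1 ≤ k) {p : ℕ} (hp : p < n * k + r) :
    posOf n k r (cellOf n k r p) = p := by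
  rcases pos_split hk p hp with h | ⟨i, j, hi, hj, rfl⟩
  · rw [cellOf_init h]
    unfold posOf
    rw [if_neg (lt_irrefl n)]
  · rw [cellOf_lr hk hi hj]
    unfold posOf
    rw [if_pos (show n - 1 - i < n by omega)]
    have e : n - 1 - (n - 1 - i) = i := by omega
    simp [e]

lemma cellOf_cellP {n k r : ℕ} (hk : 1 ≤ k) {p : ℕ} (hp : p < n * k + r) :
    CellP n k r (cellOf n k r p) := by
  rcases pos_split hk p hp with h | ⟨i, j, hi, hj, rfl⟩
  · rw [cellOf_init h]; exact Or.inr ⟨rfl, h⟩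
  · rw [cellOf_lr hk hi hj]; exact Or.inl ⟨by omega, hj⟩

lemma strictMono_fin_of_adj {α : Type*} [Preorder α] {s : ℕ} {g : Fin (s + 1) → α}
    (h : ∀ t (ht : t < s), g ⟨t, by omega⟩ < g ⟨t + 1, by omega⟩) : StrictMono g := by
  have aux : ∀ e d (hde : d < e) (he : e ≤ s), g ⟨d, by omega⟩ < g ⟨e, by omega⟩ := by
    intro e
    induction e with
    | zero => intro d hd _; exact absurd hd (Nat.not_lt_zero d)
    | succ t ih =>
      intro d hd he
      rcases Nat.lt_or_ge d t with h' | h'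
      · exact lt_trans (ih d h' (by omega)) (h t (by omega))
      · have hd' : d = t := by omega
        subst hd'
        exact h d (by omega)
  intro a b hab
  have h1 := aux b a hab (by have := b.isLt; omega)
  rwa [Fin.eta, Fin.eta] at h1

end Stmt8Aux
namespace Stmt8Aux

variable {n k r : ℕ} {w : Equiv.Perm (Fin (n * k + r))}

lemma LrPos_congr {n k r i i' j j' : ℕ} {hi hj hi' hj'} (h1 : i = i') (h2 : j = j') :
    LrPos n k r i j hi hj = LrPos n k r i' j' hi' hj' := by
  subst h1; subst h2; rfl

lemma row_chain (hw : MemLr n k r w) {i j : ℕ} (hi : i < n) :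
    ∀ j' (hjj : j < j') (hj' : j' < k),
      w (LrPos n k r i j hi (by omega)) < w (LrPos n k r i j' hi hj') := by
  intro j'
  induction j' with
  | zero => intro hjj _; exact absurd hjj (Nat.not_lt_zero j)
  | succ t ih =>
    intro hjj hj'
    rcases Nat.lt_or_ge j t with h' | h'
    · exact lt_trans (ih h' (by omega)) (hw.2.1 i t hi hj')
    · have hjt : j = t := by omega
      subst hjt
      exact hw.2.1 i j hi hj'

lemma init_chain (hw : MemLr n k r w) {j : ℕ} :
    ∀ j' (hjj : j < j') (hj' : j' < r),
      w ⟨j, by omega⟩ < w ⟨j', by omega⟩ := by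
  intro j'
  induction j' with
  | zero => intro hjj _; exact absurd hjj (Nat.not_lt_zero j)
  | succ t ih =>
    intro hjj hj'
    rcases Nat.lt_or_ge j t with h' | h'
    · exact lt_trans (ih h' (by omega)) (hw.1 t hj')
    · have hjt : j = t := by omega
      subst hjt
      exact hw.1 j hj'

def stitchPos (n k r i j t : ℕ) (hi : i + 1 < n) (hj : j < k) (ht : t ≤ k) : Fin (n * k + r) :=
  if h : t ≤ j then LrPos n k r i t (by omega) (by omega)
  else LrPos n k r (i + 1) (t - 1) hi (by omega)

lemma stitch_le {n k r i j t : ℕ} {hi : i + 1 < n} {hj : j < k} {ht : t ≤ k} (h : t ≤ j) :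
    stitchPos n k r i j t hi hj ht = LrPos n k r i t (by omega) (by omega) := by
  unfold stitchPos; rw [dif_pos h]

lemma stitch_gt {n k r i j t : ℕ} {hi : i + 1 < n} {hj : j < k} {ht : t ≤ k} (h : j < t) :
    stitchPos n k r i j t hi hj ht = LrPos n k r (i + 1) (t - 1) hi (by omega) := by
  unfold stitchPos; rw [dif_neg (by omega)]

lemma col_adj (hw : MemLr n k r w) (ha : AvoidsPat (⇑w) (MonoPat (k + 1)))
    {i j : ℕ} (hi : i + 1 < n) (hj : j < k) :
    w (LrPos n k r (i + 1) j hi hj) < w (LrPos n k r i j (by omega) hj) := by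
  by_contra hcon
  push_neg at hcon
  have hne : LrPos n k r i j (by omega) hj ≠ LrPos n k r (i + 1) j hi hj := by
    intro hEq
    have hv := congrArg Fin.val hEq
    simp only [LrPos] at hv
    have hik : (i + 1) * k = i * k + k := by ring
    omega
  have hlt : w (LrPos n k r i j (by omega) hj) < w (LrPos n k r (i + 1) j hi hj) := by
    rcases lt_or_eq_of_le hcon with h | h
    · exact h
    · exact absurd (w.injective h) hne
  apply ha
  refine ⟨fun a => stitchPos n k r i j (a : ℕ) hi hj (by have := a.isLt; omega), ?_, ?_⟩
  case _ =>
    apply strictMono_fin_of_adj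
    intro t ht
    show stitchPos n k r i j t hi hj (by omega) < stitchPos n k r i j (t + 1) hi hj (by omega)
    rcases Nat.lt_or_ge t j with h1 | h1
    · rw [stitch_le (by omega), stitch_le (by omega)]
      simp only [LrPos, Fin.mk_lt_mk]
      omega
    · rcases Nat.lt_or_ge j t with h2 | h2
      · rw [stitch_gt (by omega), stitch_gt (by omega)]
        simp only [LrPos, Fin.mk_lt_mk]
        omega
      · have hjt : t = j := by omega
        subst hjt
        rw [stitch_le le_rfl, stitch_gt (by omega)]
        simp only [LrPos, Fin.mk_lt_mk]
        have hik : (i + 1) * k = i * k + k := by ring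
        omega
  case _ =>
    have hm : StrictMono (fun a : Fin (k + 1) =>
        w (stitchPos n k r i j (a : ℕ) hi hj (by have := a.isLt; omega))) := by
      apply strictMono_fin_of_adj
      intro t ht
      show w (stitchPos n k r i j t hi hj (by omega))
          < w (stitchPos n k r i j (t + 1) hi hj (by omega))
      rcases Nat.lt_or_ge t j with h1 | h1
      · rw [stitch_le (by omega), stitch_le (by omega)]
        exact hw.2.1 i t (by omega) (by omega)
      · rcases Nat.lt_or_ge j t with h2 | h2
        · rw [stitch_gt (by omega), stitch_gt (by omega)]
          have h0 := hw.2.1 (i + 1) (t - 1) hi (by omega)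
          convert h0 using 2
          all_goals exact LrPos_congr rfl (by omega)
        · have hjt : t = j := by omega
          subst hjt
          rw [stitch_le le_rfl, stitch_gt (by omega)]
          convert hlt using 2
          all_goals exact LrPos_congr rfl (by omega)
    intro a b
    constructor
    · intro hab
      exact hm (show a < b from hab)
    · intro hab
      exact hm.lt_iff_lt.mp hab

lemma col_chain (hw : MemLr n k r w) (ha : AvoidsPat (⇑w) (MonoPat (k + 1)))
    {j : ℕ} (hj : j < k) :
    ∀ i' i (hii : i < i') (hi' : i' < n),
      w (LrPos n k r i' j hi' hj) < w (LrPos n k r i j (by omega) hj) := by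
  intro i'
  induction i' with
  | zero => intro i hii _; exact absurd hii (Nat.not_lt_zero i)
  | succ t ih =>
    intro i hii hi'
    rcases Nat.lt_or_ge i t with h' | h'
    · exact lt_trans (col_adj hw ha hi' hj) (ih i h' (by omega))
    · have hit : i = t := by omega
      subst hit
      exact col_adj hw ha hi' hj

lemma col_le (hw : MemLr n k r w) (ha : AvoidsPat (⇑w) (MonoPat (k + 1)))
    {j i i' : ℕ} (hii : i ≤ i') (hi' : i' < n) (hj : j < k) :
    w (LrPos n k r i' j hi' hj) ≤ w (LrPos n k r i j (by omega) hj) := by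
  rcases Nat.eq_or_lt_of_le hii with h | h
  · subst h; exact le_refl _
  · exact le_of_lt (col_chain hw ha hj i' i h hi')

lemma init_over (hw : MemLr n k r w) (hn : 1 ≤ n) (hr : r < k) {j : ℕ} (hj : j < r) :
    w (LrPos n k r 0 j (by omega) (by omega)) < w ⟨j, by omega⟩ := by
  have hkn : k ≤ n * k := Nat.le_mul_of_pos_left k hn
  have h := hw.2.2.2 j hj (by omega)
  convert h using 2
  exact Fin.ext (by simp [LrPos])

end Stmt8Aux
namespace Stmt8Aux

variable {n k r : ℕ}

lemma cellP_mk (n k r i j : ℕ) :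
    CellP n k r (i, j) ↔ ((i < n ∧ j < k) ∨ (i = n ∧ j < r)) := Iff.rfl

def fwdEntry (n k r : ℕ) (w : Fin (n * k + r) → Fin (n * k + r)) (c : ℕ × ℕ) : ℕ :=
  if h : c.1 < n ∧ c.2 < k then
    (w (LrPos n k r (n - 1 - c.1) c.2 (by omega) h.2) : ℕ) + 1
  else if h2 : c.1 = n ∧ c.2 < r then (w ⟨c.2, by omega⟩ : ℕ) + 1
  else 0

variable {w : Fin (n * k + r) → Fin (n * k + r)}

lemma fwdEntry_main {i j : ℕ} (h1 : i < n) (h2 : j < k) :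
    fwdEntry n k r w (i, j) = (w (LrPos n k r (n - 1 - i) j (by omega) h2) : ℕ) + 1 := by
  unfold fwdEntry
  rw [dif_pos (show (i, j).1 < n ∧ (i, j).2 < k from ⟨h1, h2⟩)]

lemma fwdEntry_lr {i j : ℕ} (hi : i < n) (hj : j < k) :
    fwdEntry n k r w (n - 1 - i, j) = (w (LrPos n k r i j hi hj) : ℕ) + 1 := by
  rw [fwdEntry_main (show n - 1 - i < n by omega) hj]
  have e : LrPos n k r (n - 1 - (n - 1 - i)) j (by omega) hj = LrPos n k r i j hi hj :=
    LrPos_congr (by omega) rfl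
  rw [e]

lemma fwdEntry_init {j : ℕ} (hj : j < r) :
    fwdEntry n k r w (n, j) = (w ⟨j, by omega⟩ : ℕ) + 1 := by
  unfold fwdEntry
  rw [dif_neg (show ¬((n, j).1 < n ∧ (n, j).2 < k) by rintro ⟨h, -⟩; omega),
    dif_pos (show (n, j).1 = n ∧ (n, j).2 < r from ⟨rfl, hj⟩)]

lemma fwdEntry_notcell {c : ℕ × ℕ} (hc : ¬ CellP n k r c) : fwdEntry n k r w c = 0 := by
  unfold fwdEntry
  rw [dif_neg (fun h => hc (Or.inl h)), dif_neg (fun h => hc (Or.inr h))]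

lemma fwdEntry_le (c : ℕ × ℕ) : fwdEntry n k r w c ≤ n * k + r := by
  unfold fwdEntry
  split_ifs with h1 h2
  · have := (w (LrPos n k r (n - 1 - c.1) c.2 (by omega) h1.2)).isLt
    omega
  · have := (w (⟨c.2, by omega⟩ : Fin (n * k + r))).isLt
    omega
  · omega

def fwdSYT (n k r : ℕ) (hn : 1 ≤ n) (hk : 1 ≤ k) (hr : r < k)
    (w : Equiv.Perm (Fin (n * k + r))) (hw : MemLr n k r w)
    (ha : AvoidsPat (⇑w) (MonoPat (k + 1))) :
    SkewSYT (LamF n k r) (fun _ => 0) where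
  entry := fwdEntry n k r ⇑w
  entry_outside c hc :=
    fwdEntry_notcell (fun h => hc ((isCell_iff n k r c).mpr h))
  entry_pos c hc := by
    rcases (isCell_iff n k r c).mp hc with ⟨h1, h2⟩ | ⟨h1, h2⟩
    · have e : c = (c.1, c.2) := rfl
      rw [e, fwdEntry_main h1 h2]
      omega
    · have e : c = (n, c.2) := by rw [← h1]
      rw [e, fwdEntry_init h2]
      omega
  entry_inj c c' hc hc' h := by
    rcases (isCell_iff n k r c).mp hc with ⟨h1, h2⟩ | ⟨h1, h2⟩ <;>
      rcases (isCell_iff n k r c').mp hc' with ⟨h1', h2'⟩ | ⟨h1', h2'⟩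
    · rw [show c = (c.1, c.2) from rfl, fwdEntry_main h1 h2,
        show c' = (c'.1, c'.2) from rfl, fwdEntry_main h1' h2'] at h
      have hv := Nat.add_right_cancel h
      have hww := Equiv.injective w (Fin.ext hv)
      have hvv := congrArg Fin.val hww
      simp only [LrPos] at hvv
      have h3 : (n - 1 - c.1) * k + c.2 = (n - 1 - c'.1) * k + c'.2 := by omega
      obtain ⟨e1, e2⟩ := blk_unique h2 h2' h3
      exact Prod.ext (by omega) e2
    · rw [show c = (c.1, c.2) from rfl, fwdEntry_main h1 h2,
        show c' = (n, c'.2) from by rw [← h1'], fwdEntry_init h2'] at h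
      have hv := Nat.add_right_cancel h
      have hww := Equiv.injective w (Fin.ext hv)
      have hvv := congrArg Fin.val hww
      simp only [LrPos] at hvv
      exfalso
      omega
    · rw [show c = (n, c.2) from by rw [← h1], fwdEntry_init h2,
        show c' = (c'.1, c'.2) from rfl, fwdEntry_main h1' h2'] at h
      have hv := Nat.add_right_cancel h
      have hww := Equiv.injective w (Fin.ext hv)
      have hvv := congrArg Fin.val hww
      simp only [LrPos] at hvv
      exfalso
      omega
    · rw [show c = (n, c.2) from by rw [← h1], fwdEntry_init h2,
        show c' = (n, c'.2) from by rw [← h1'], fwdEntry_init h2'] at h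
      have hv := Nat.add_right_cancel h
      have hww := Equiv.injective w (Fin.ext hv)
      have hvv := congrArg Fin.val hww
      have : c.2 = c'.2 := hvv
      exact Prod.ext (h1.trans h1'.symm) this
  entry_init c hc v hv1 hv2 := by
    have hle := fwdEntry_le (n := n) (k := k) (r := r) (w := ⇑w) c
    have hvN : v - 1 < n * k + r := by omega
    set q := w.symm ⟨v - 1, hvN⟩ with hqdef
    have hq : w q = ⟨v - 1, hvN⟩ := Equiv.apply_symm_apply w _
    rcases pos_split hk (q : ℕ) q.isLt with hqr | ⟨i, j, hi, hj, hq2⟩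
    · refine ⟨(n, (q : ℕ)), (isCell_iff n k r _).mpr (Or.inr ⟨rfl, hqr⟩), ?_⟩
      rw [fwdEntry_init hqr]
      have e : (⟨(q : ℕ), by omega⟩ : Fin (n * k + r)) = q := Fin.eta q q.isLt
      rw [e, hq]
      show v - 1 + 1 = v
      omega
    · refine ⟨(n - 1 - i, j), (isCell_iff n k r _).mpr (Or.inl ⟨by omega, hj⟩), ?_⟩
      rw [fwdEntry_lr hi hj]
      have e : LrPos n k r i j hi hj = q := Fin.ext (by simp only [LrPos]; omega)
      rw [e, hq]
      show v - 1 + 1 = v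
      omega
  row_strict i j j' hc hc' hjj := by
    rcases (cellP_mk n k r i j).mp ((isCell_iff n k r _).mp hc) with ⟨h1, h2⟩ | ⟨h1, h2⟩
    · rcases (cellP_mk n k r i j').mp ((isCell_iff n k r _).mp hc') with ⟨h1', h2'⟩ | ⟨h1', h2'⟩
      · rw [fwdEntry_main h1 h2, fwdEntry_main h1' h2']
        exact Nat.add_lt_add_right (row_chain hw (show n - 1 - i < n by omega) j' hjj h2') 1
      · omega
    · rcases (cellP_mk n k r i j').mp ((isCell_iff n k r _).mp hc') with ⟨h1', h2'⟩ | ⟨h1', h2'⟩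
      · omega
      · subst h1
        rw [fwdEntry_init h2, fwdEntry_init h2']
        exact Nat.add_lt_add_right (init_chain hw j' hjj h2') 1
  col_strict i i' j hc hc' hii := by
    rcases (cellP_mk n k r i j).mp ((isCell_iff n k r _).mp hc) with ⟨h1, h2⟩ | ⟨h1, h2⟩
    · rcases (cellP_mk n k r i' j).mp ((isCell_iff n k r _).mp hc') with ⟨h1', h2'⟩ | ⟨h1', h2'⟩
      · rw [fwdEntry_main h1 h2, fwdEntry_main h1' h2']
        exact Nat.add_lt_add_right
          (col_chain hw ha h2 (n - 1 - i) (n - 1 - i') (by omega) (by omega)) 1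
      · rw [h1']
        rw [fwdEntry_main h1 h2, fwdEntry_init h2']
        have hA := col_le hw ha (show (0 : ℕ) ≤ n - 1 - i from Nat.zero_le _) (by omega) h2
        have hB := init_over hw hn hr h2'
        exact Nat.add_lt_add_right (lt_of_le_of_lt hA hB) 1
    · rcases (cellP_mk n k r i' j).mp ((isCell_iff n k r _).mp hc') with ⟨h1', h2'⟩ | ⟨h1', h2'⟩ <;>
        omega

end Stmt8Aux
namespace Stmt8Aux

variable {n k r : ℕ}

lemma entry_le_card (hn : 1 ≤ n) (hk : 1 ≤ k) (T : SkewSYT (LamF n k r) (fun _ => 0))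
    {c : ℕ × ℕ} (hc : CellP n k r c) : T.entry c ≤ n * k + r := by
  by_contra hgt
  push_neg at hgt
  have hex : ∀ a : Fin (n * k + r + 1), ∃ c', CellP n k r c' ∧ T.entry c' = (a : ℕ) + 1 := by
    intro a
    rcases Nat.lt_or_ge ((a : ℕ) + 1) (T.entry c) with h | h
    · obtain ⟨c', hc', he'⟩ :=
        T.entry_init c ((isCell_iff n k r c).mpr hc) ((a : ℕ) + 1) (by omega) h
      exact ⟨c', (isCell_iff n k r c').mp hc', he'⟩
    · have he : (a : ℕ) + 1 = T.entry c := by have := a.isLt; omega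
      exact ⟨c, hc, he.symm⟩
  choose cf hcf hef using hex
  have hinj : Function.Injective
      (fun a => (⟨posOf n k r (cf a), posOf_lt (hcf a)⟩ : Fin (n * k + r))) := by
    intro a b hab
    have h1 : posOf n k r (cf a) = posOf n k r (cf b) := congrArg Fin.val hab
    have h2 : cf a = cf b := posOf_inj (hcf a) (hcf b) h1
    have h3 : (a : ℕ) + 1 = (b : ℕ) + 1 := by rw [← hef a, ← hef b, h2]
    exact Fin.ext (by omega)
  have hcard := Fintype.card_le_of_injective _ hinj
  simp only [Fintype.card_fin] at hcard
  omega

def bwdFun (hn : 1 ≤ n) (hk : 1 ≤ k) (T : SkewSYT (LamF n k r) (fun _ => 0)) :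
    Fin (n * k + r) → Fin (n * k + r) := fun p =>
  ⟨T.entry (cellOf n k r (p : ℕ)) - 1, by
    have hc := cellOf_cellP hk p.isLt
    have h1 := T.entry_pos _ ((isCell_iff n k r _).mpr hc)
    have h2 := entry_le_card hn hk T hc
    have h3 : 1 ≤ n * k := Nat.mul_pos hn hk
    omega⟩

lemma bwdFun_inj (hn : 1 ≤ n) (hk : 1 ≤ k) (T : SkewSYT (LamF n k r) (fun _ => 0)) :
    Function.Injective (bwdFun hn hk T) := by
  intro p p' h
  have hv : T.entry (cellOf n k r (p : ℕ)) - 1 = T.entry (cellOf n k r (p' : ℕ)) - 1 :=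
    congrArg Fin.val h
  have hc := cellOf_cellP (n := n) (r := r) hk p.isLt
  have hc' := cellOf_cellP (n := n) (r := r) hk p'.isLt
  have h1 := T.entry_pos _ ((isCell_iff n k r _).mpr hc)
  have h1' := T.entry_pos _ ((isCell_iff n k r _).mpr hc')
  have he : T.entry (cellOf n k r (p : ℕ)) = T.entry (cellOf n k r (p' : ℕ)) := by omega
  have hcells := T.entry_inj _ _ ((isCell_iff n k r _).mpr hc) ((isCell_iff n k r _).mpr hc') he
  have hpos : posOf n k r (cellOf n k r (p : ℕ)) = posOf n k r (cellOf n k r (p' : ℕ)) := by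
    rw [hcells]
  rw [posOf_cellOf hk p.isLt, posOf_cellOf hk p'.isLt] at hpos
  exact Fin.ext hpos

noncomputable def bwdPerm (hn : 1 ≤ n) (hk : 1 ≤ k) (T : SkewSYT (LamF n k r) (fun _ => 0)) :
    Equiv.Perm (Fin (n * k + r)) :=
  Equiv.ofBijective (bwdFun hn hk T) (Finite.injective_iff_bijective.mp (bwdFun_inj hn hk T))

lemma bwdPerm_apply (hn : 1 ≤ n) (hk : 1 ≤ k) (T : SkewSYT (LamF n k r) (fun _ => 0))
    (p : Fin (n * k + r)) :
    bwdPerm hn hk T p = ⟨T.entry (cellOf n k r (p : ℕ)) - 1, (bwdFun hn hk T p).isLt⟩ :=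
  rfl

end Stmt8Aux
namespace Stmt8Aux

variable {n k r : ℕ}

lemma bwd_lt (hn : 1 ≤ n) (hk : 1 ≤ k) (T : SkewSYT (LamF n k r) (fun _ => 0))
    {p p' : Fin (n * k + r)}
    (h : T.entry (cellOf n k r (p : ℕ)) < T.entry (cellOf n k r (p' : ℕ)))
    (h1 : 1 ≤ T.entry (cellOf n k r (p : ℕ))) :
    bwdPerm hn hk T p < bwdPerm hn hk T p' := by
  rw [bwdPerm_apply, bwdPerm_apply, Fin.lt_def]; dsimp only
  omega

lemma mem_bwd (hn : 1 ≤ n) (hk : 1 ≤ k) (hr : r < k) (T : SkewSYT (LamF n k r) (fun _ => 0)) :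
    MemLr n k r (bwdPerm hn hk T) := by
  refine ⟨?_, ?_, ?_, ?_⟩
  · -- initial block increasing
    intro j hj
    apply bwd_lt hn hk T
    · show T.entry (cellOf n k r j) < T.entry (cellOf n k r (j + 1))
      rw [cellOf_init (show j < r by omega), cellOf_init (show j + 1 < r by omega)]
      exact T.row_strict n j (j + 1)
        ((isCell_iff n k r _).mpr (Or.inr ⟨rfl, by omega⟩))
        ((isCell_iff n k r _).mpr (Or.inr ⟨rfl, by omega⟩)) (by omega)
    · show 1 ≤ T.entry (cellOf n k r j)
      rw [cellOf_init (show j < r by omega)]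
      exact T.entry_pos _ ((isCell_iff n k r _).mpr (Or.inr ⟨rfl, by omega⟩))
  · -- rows increasing
    intro i j hi hj
    apply bwd_lt hn hk T
    · show T.entry (cellOf n k r (r + (i * k + j)))
        < T.entry (cellOf n k r (r + (i * k + (j + 1))))
      rw [cellOf_lr hk hi (by omega), cellOf_lr hk hi hj]
      exact T.row_strict (n - 1 - i) j (j + 1)
        ((isCell_iff n k r _).mpr (Or.inl ⟨by omega, by omega⟩))
        ((isCell_iff n k r _).mpr (Or.inl ⟨by omega, hj⟩)) (by omega)
    · show 1 ≤ T.entry (cellOf n k r (r + (i * k + j)))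
      rw [cellOf_lr hk hi (by omega)]
      exact T.entry_pos _ ((isCell_iff n k r _).mpr (Or.inl ⟨by omega, by omega⟩))
  · -- L2'
    intro i j hi hj
    apply bwd_lt hn hk T
    · show T.entry (cellOf n k r (r + ((i + 1) * k + j)))
        < T.entry (cellOf n k r (r + (i * k + (j + 1))))
      rw [cellOf_lr hk hi (by omega), cellOf_lr hk (by omega) hj]
      have e : n - 1 - i = n - 1 - (i + 1) + 1 := by omega
      rw [e]
      refine lt_trans
        (T.row_strict (n - 1 - (i + 1)) j (j + 1)
          ((isCell_iff n k r _).mpr (Or.inl ⟨by omega, by omega⟩))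
          ((isCell_iff n k r _).mpr (Or.inl ⟨by omega, hj⟩)) (by omega))
        (T.col_strict (n - 1 - (i + 1)) (n - 1 - (i + 1) + 1) (j + 1)
          ((isCell_iff n k r _).mpr (Or.inl ⟨by omega, hj⟩))
          ((isCell_iff n k r _).mpr (Or.inl ⟨by omega, hj⟩)) (by omega))
    · show 1 ≤ T.entry (cellOf n k r (r + ((i + 1) * k + j)))
      rw [cellOf_lr hk hi (by omega)]
      exact T.entry_pos _ ((isCell_iff n k r _).mpr (Or.inl ⟨by omega, by omega⟩))
  · -- initial block dominates first block
    intro j hj h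
    apply bwd_lt hn hk T
    · show T.entry (cellOf n k r (r + j)) < T.entry (cellOf n k r j)
      have e : r + j = r + (0 * k + j) := by simp
      rw [e, cellOf_lr hk hn (by omega), cellOf_init hj]
      exact T.col_strict (n - 1 - 0) n j
        ((isCell_iff n k r _).mpr (Or.inl ⟨by omega, by omega⟩))
        ((isCell_iff n k r _).mpr (Or.inr ⟨rfl, hj⟩)) (by omega)
    · show 1 ≤ T.entry (cellOf n k r (r + j))
      have e : r + j = r + (0 * k + j) := by simp
      rw [e, cellOf_lr hk hn (by omega)]
      exact T.entry_pos _ ((isCell_iff n k r _).mpr (Or.inl ⟨by omega, by omega⟩))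

lemma readlt_pos (hk : 1 ≤ k) {p p' : ℕ} (hp' : p' < n * k + r) (hpp : p < p') :
    ReadLT (cellOf n k r p) (cellOf n k r p') := by
  have hpN : p < n * k + r := by omega
  rcases pos_split hk p hpN with h | ⟨i, j, hi, hj, rfl⟩
  · rcases pos_split hk p' hp' with h' | ⟨i', j', hi', hj', rfl⟩
    · rw [cellOf_init h, cellOf_init h']
      exact Or.inr ⟨rfl, hpp⟩
    · rw [cellOf_init h, cellOf_lr hk hi' hj']
      exact Or.inl (show n - 1 - i' < n by omega)
  · rcases pos_split hk p' hp' with h' | ⟨i', j', hi', hj', rfl⟩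
    · exfalso; omega
    · rw [cellOf_lr hk hi hj, cellOf_lr hk hi' hj']
      rcases lt_trichotomy i i' with hii | hii | hii
      · exact Or.inl (show n - 1 - i' < n - 1 - i by omega)
      · subst hii
        exact Or.inr ⟨rfl, by omega⟩
      · exfalso
        have h1 : (i' + 1) * k ≤ i * k := Nat.mul_le_mul (by omega) (le_refl k)
        have h2 : (i' + 1) * k = i' * k + k := by ring
        omega

lemma col_step (hk : 1 ≤ k) (hrk : r ≤ k) (T : SkewSYT (LamF n k r) (fun _ => 0))
    {c c' : ℕ × ℕ} (hc : CellP n k r c) (hc' : CellP n k r c')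
    (hrl : ReadLT c c') (he : T.entry c < T.entry c') : c.2 < c'.2 := by
  rcases hrl with h | ⟨h1, h2⟩
  · by_contra hle
    push_neg at hle
    have hc1n : c'.1 < n := by
      rcases hc with ⟨a2, b2⟩ | ⟨a2, b2⟩ <;> omega
    have hc2k : c.2 < k := by
      rcases hc with ⟨a2, b2⟩ | ⟨a2, b2⟩ <;> omega
    have hmid : CellP n k r (c'.1, c.2) := Or.inl ⟨hc1n, hc2k⟩
    have hA : T.entry c' ≤ T.entry (c'.1, c.2) := by
      rcases Nat.eq_or_lt_of_le hle with hEq | hlt2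
      · have e : (c'.1, c.2) = c' := by rw [← hEq]
        rw [e]
      · exact le_of_lt (T.row_strict c'.1 c'.2 c.2
          ((isCell_iff n k r _).mpr hc') ((isCell_iff n k r _).mpr hmid) hlt2)
    have hB : T.entry (c'.1, c.2) < T.entry (c.1, c.2) :=
      T.col_strict c'.1 c.1 c.2 ((isCell_iff n k r _).mpr hmid)
        ((isCell_iff n k r _).mpr hc) h
    have hcon : T.entry c' < T.entry c := lt_of_le_of_lt hA hB
    omega
  · exact h2

lemma fin_le_of_strictMono {s : ℕ} {g : Fin (s + 1) → ℕ} (hg : StrictMono g) :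
    ∀ a : Fin (s + 1), (a : ℕ) ≤ g a := by
  intro a
  obtain ⟨t, ht⟩ := a
  induction t with
  | zero => exact Nat.zero_le _
  | succ s' ih =>
    have h1 := ih (by omega)
    have h2 : g ⟨s', by omega⟩ < g ⟨s' + 1, ht⟩ := hg (show s' < s' + 1 from Nat.lt_succ_self s')
    simp only [Fin.val_mk] at h1 ⊢
    omega

lemma avoid_bwd (hn : 1 ≤ n) (hk : 1 ≤ k) (hr : r < k)
    (T : SkewSYT (LamF n k r) (fun _ => 0)) :
    AvoidsPat (⇑(bwdPerm hn hk T)) (MonoPat (k + 1)) := by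
  rintro ⟨f, hf, hiff⟩
  have hwlt : ∀ a b : Fin (k + 1), a < b →
      T.entry (cellOf n k r ((f a : Fin (n * k + r)) : ℕ))
        < T.entry (cellOf n k r ((f b : Fin (n * k + r)) : ℕ)) := by
    intro a b hab
    have h := (hiff a b).mp (show MonoPat (k + 1) a < MonoPat (k + 1) b from hab)
    have h1 := T.entry_pos (cellOf n k r ((f a : Fin (n * k + r)) : ℕ))
      ((isCell_iff n k r _).mpr (cellOf_cellP hk (f a).isLt))
    have hv : T.entry (cellOf n k r ((f a : Fin (n * k + r)) : ℕ)) - 1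
        < T.entry (cellOf n k r ((f b : Fin (n * k + r)) : ℕ)) - 1 := h
    omega
  have hg : StrictMono (fun a : Fin (k + 1) =>
      (cellOf n k r ((f a : Fin (n * k + r)) : ℕ)).2) := by
    intro a b hab
    exact col_step hk (le_of_lt hr) T (cellOf_cellP hk (f a).isLt)
      (cellOf_cellP hk (f b).isLt) (readlt_pos hk (f b).isLt (hf hab)) (hwlt a b hab)
  set aK : Fin (k + 1) := ⟨k, by omega⟩ with haK
  have hfinal := fin_le_of_strictMono hg aK
  have hcell := cellOf_cellP (n := n) (r := r) hk (f aK).isLt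
  have hav : (aK : ℕ) = k := rfl
  rcases hcell with ⟨a2, b2⟩ | ⟨a2, b2⟩ <;> omega

end Stmt8Aux
namespace Stmt8Aux

variable {n k r : ℕ}

lemma skew_ext {lam mu : ℕ → ℕ} {T T' : SkewSYT lam mu} (h : T.entry = T'.entry) : T = T' := by
  cases T
  cases T'
  simp only at h
  subst h
  rfl

lemma bwd_fwd (hn : 1 ≤ n) (hk : 1 ≤ k) (hr : r < k) (w : Equiv.Perm (Fin (n * k + r)))
    (hw : MemLr n k r w) (ha : AvoidsPat (⇑w) (MonoPat (k + 1))) :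
    bwdPerm hn hk (fwdSYT n k r hn hk hr w hw ha) = w := by
  apply Equiv.ext
  intro p
  apply Fin.ext
  rw [bwdPerm_apply]
  show fwdEntry n k r (⇑w) (cellOf n k r (p : ℕ)) - 1 = (w p : ℕ)
  rcases pos_split hk (p : ℕ) p.isLt with h | ⟨i, j, hi, hj, hp⟩
  · rw [cellOf_init h, fwdEntry_init h, Fin.eta p p.isLt]
    omega
  · rw [hp, cellOf_lr hk hi hj, fwdEntry_lr hi hj]
    have e : LrPos n k r i j hi hj = p := Fin.ext (by simp only [LrPos]; omega)
    rw [e]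
    omega

lemma fwd_bwd (hn : 1 ≤ n) (hk : 1 ≤ k) (hr : r < k)
    (T : SkewSYT (LamF n k r) (fun _ => 0)) :
    fwdSYT n k r hn hk hr (bwdPerm hn hk T) (mem_bwd hn hk hr T) (avoid_bwd hn hk hr T) = T := by
  apply skew_ext
  funext c
  show fwdEntry n k r (⇑(bwdPerm hn hk T)) c = T.entry c
  by_cases hc : CellP n k r c
  · rcases hc with ⟨h1, h2⟩ | ⟨h1, h2⟩
    · rw [show c = (c.1, c.2) from rfl, fwdEntry_main h1 h2]
      show T.entry (cellOf n k r (r + ((n - 1 - c.1) * k + c.2))) - 1 + 1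
        = T.entry (c.1, c.2)
      rw [cellOf_lr hk (by omega) h2]
      have e : n - 1 - (n - 1 - c.1) = c.1 := by omega
      rw [e]
      have hpos := T.entry_pos (c.1, c.2) ((isCell_iff n k r _).mpr (Or.inl ⟨h1, h2⟩))
      omega
    · rw [show c = (n, c.2) from by rw [← h1], fwdEntry_init h2]
      show T.entry (cellOf n k r c.2) - 1 + 1 = T.entry (n, c.2)
      rw [cellOf_init h2]
      have hpos := T.entry_pos (n, c.2) ((isCell_iff n k r _).mpr (Or.inr ⟨rfl, h2⟩))
      omega
  · rw [fwdEntry_notcell hc, T.entry_outside c (fun hcc => hc ((isCell_iff n k r c).mp hcc))]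

end Stmt8Aux

/-- `|L_{n,k;r}(1 2 ⋯ (k+1))| = f^{⟨k^n, r⟩}`. -/
theorem stmt_8 (n k r : ℕ) (hn : 1 ≤ n) (hk : 1 ≤ k) (hr : r ≤ k - 1) :
    Nat.card {w : Equiv.Perm (Fin (n * k + r)) //
        MemLr n k r w ∧ AvoidsPat (⇑w) (MonoPat (k + 1))} =
      Nat.card (SkewSYT (fun i => if i < n then k else if i = n then r else 0)
        (fun _ => 0)) := by
  have hrk : r < k := by omega
  refine Nat.card_congr ?_
  exact {
    toFun := fun x => Stmt8Aux.fwdSYT n k r hn hk hrk x.1 x.2.1 x.2.2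
    invFun := fun T => ⟨Stmt8Aux.bwdPerm hn hk T, Stmt8Aux.mem_bwd hn hk hrk T,
      Stmt8Aux.avoid_bwd hn hk hrk T⟩
    left_inv := fun x => Subtype.ext (Stmt8Aux.bwd_fwd hn hk hrk x.1 x.2.1 x.2.2)
    right_inv := fun T => Stmt8Aux.fwd_bwd hn hk hrk T
  }
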